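/- Let G be a clique-grid graph with representation f: V(G) → [t] × [t'], i.e., each set f⁻¹(i,j) induces a clique, and every edge of G joins vertices whose cells differ by at most 2 in each coordinate. Let H be a minimal backbone for (G, f). Then for every cell (i,j), |f⁻¹(i,j) ∩ V(H)| ≤ 24, and the maximum degree of H is at most 599. -/

import Mathlib

/-- `f` is a clique-grid representation of `G`: each cell induces a clique, and every
edge joins vertices whose cells differ by at most 2 in each coordinate. -/
def IsRepresentation {V : Type*} (G : SimpleGraph V) (f : V → ℤ × ℤ) : Prop :=
  (∀ u v : V, u ≠ v → f u = f v → G.Adj u v) ∧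
  (∀ u v : V, G.Adj u v → |(f u).1 - (f v).1| ≤ 2 ∧ |(f u).2 - (f v).2| ≤ 2)

/-- The induced subgraph of `G` on the vertex set `S` is a backbone for `(G, f)`:
whenever some edge of `G` joins two distinct cells, some edge of the induced subgraph
also joins those two cells. -/
def IsBackbone {V : Type*} (G : SimpleGraph V) (f : V → ℤ × ℤ) (S : Set V) : Prop :=
  ∀ c c' : ℤ × ℤ, c ≠ c' → (∃ u v : V, f u = c ∧ f v = c' ∧ G.Adj u v) →
    ∃ u' ∈ S, ∃ v' ∈ S, f u' = c ∧ f v' = c' ∧ G.Adj u' v'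

private lemma ncard_biUnion_le' {V : Type*} [Fintype V] (B : Finset (ℤ × ℤ))
    (A : ℤ × ℤ → Set V) : (⋃ d ∈ B, A d).ncard ≤ ∑ d ∈ B, (A d).ncard := by
  classical
  induction B using Finset.induction with
  | empty => simp
  | @insert a s hx ih =>
    rw [Finset.sum_insert hx]
    refine le_trans (le_trans (Set.ncard_le_ncard ?_ (Set.toFinite _))
      (Set.ncard_union_le (A a) (⋃ d ∈ s, A d))) (by omega)
    intro x hxx
    rw [Set.mem_iUnion₂] at hxx
    obtain ⟨d, hd, hxd⟩ := hxx
    rcases Finset.mem_insert.1 hd with rfl | hd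
    · exact Set.mem_union_left _ hxd
    · exact Set.mem_union_right _ (Set.mem_iUnion₂.2 ⟨d, hd, hxd⟩)

/-- A minimal backbone of a clique-grid graph has at most 24 vertices in each cell, and
its maximum degree is at most 599. -/
theorem minimal_backbone_bounded_degree {V : Type*} [Fintype V] (G : SimpleGraph V)
    (f : V → ℤ × ℤ) (hrep : IsRepresentation G f) (S : Set V)
    (hS : IsBackbone G f S) (hmin : ∀ S' : Set V, S' ⊂ S → ¬ IsBackbone G f S') :
    (∀ c : ℤ × ℤ, {v ∈ S | f v = c}.ncard ≤ 24) ∧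
    (∀ v ∈ S, {u ∈ S | G.Adj v u}.ncard ≤ 599) := by
  classical
  -- Key: every vertex of S is the unique S-witness in its cell for some nearby cell c'.
  have key : ∀ v ∈ S, ∃ c' : ℤ × ℤ, c' ≠ f v ∧ |(f v).1 - c'.1| ≤ 2 ∧ |(f v).2 - c'.2| ≤ 2 ∧
      (∃ u ∈ S, ∃ w ∈ S, f u = f v ∧ f w = c' ∧ G.Adj u w) ∧
      (∀ u ∈ S, ∀ w ∈ S, f u = f v → f w = c' → G.Adj u w → u = v) := by
    intro v hv
    have hsub : S \ {v} ⊂ S := by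
      constructor
      · exact Set.diff_subset
      · intro h
        exact (h hv).2 rfl
    have hnb := hmin (S \ {v}) hsub
    simp only [IsBackbone, not_forall] at hnb
    obtain ⟨c, c', hcc', hedge, hfail⟩ := hnb
    push_neg at hfail
    obtain ⟨u, hu, w, hw, hfu, hfw, hadj⟩ := hS c c' hcc' hedge
    -- every S-pair for (c, c') must involve v
    have hmust : ∀ u' ∈ S, ∀ w' ∈ S, f u' = c → f w' = c' → G.Adj u' w' → u' = v ∨ w' = v := by
      intro u' hu' w' hw' h1 h2 h3
      by_contra hne
      push_neg at hne
      exact hfail u' ⟨hu', hne.1⟩ w' ⟨hw', hne.2⟩ h1 h2 h3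
    have hv_in : f v = c ∨ f v = c' := by
      rcases hmust u hu w hw hfu hfw hadj with rfl | rfl
      · exact Or.inl hfu
      · exact Or.inr hfw
    rcases hv_in with hvc | hvc
    · refine ⟨c', by rw [hvc]; exact (Ne.symm hcc'), ?_, ?_, ⟨u, hu, w, hw, by rw [hfu, hvc], hfw, hadj⟩, ?_⟩
      · have := (hrep.2 u w hadj).1; rw [hfu, hfw] at this; rw [hvc]; exact this
      · have := (hrep.2 u w hadj).2; rw [hfu, hfw] at this; rw [hvc]; exact this
      · intro u' hu' w' hw' h1 h2 h3
        rcases hmust u' hu' w' hw' (h1.trans hvc) h2 h3 with h | rfl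
        · exact h
        · exact absurd (hvc.symm.trans h2) hcc'
    · refine ⟨c, by rw [hvc]; exact hcc', ?_, ?_, ⟨w, hw, u, hu, by rw [hfw, hvc], hfu, hadj.symm⟩, ?_⟩
      · have := (hrep.2 w u hadj.symm).1; rw [hfu, hfw] at this; rw [hvc]; exact this
      · have := (hrep.2 w u hadj.symm).2; rw [hfu, hfw] at this; rw [hvc]; exact this
      · intro u' hu' w' hw' h1 h2 h3
        rcases hmust w' hw' u' hu' h2 (h1.trans hvc) h3.symm with rfl | h
        · exact absurd (hvc.symm.trans h2) hcc'.symm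
        · exact h
  choose g hg1 hg2 hg3 hg4 hg5 using key
  -- cell bound
  have cell_bound : ∀ c : ℤ × ℤ, {v ∈ S | f v = c}.ncard ≤ 24 := by
    intro c
    set T : Set V := {v ∈ S | f v = c} with hT
    by_cases hTe : T = ∅
    · simp [hTe]
    -- the map v ↦ g v hv is injective on T, with values in a 24-element box
    have hvex : ∀ v ∈ T, v ∈ S := fun v hv => hv.1
    set g' : V → ℤ × ℤ := fun v => if h : v ∈ S then g v h else c with hg'
    have hinj : Set.InjOn g' T := by
      intro x hx y hy hxy
      simp only [hg', dif_pos hx.1, dif_pos hy.1] at hxy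
      -- g x hx.1 = g y hy.1 =: c₀; witnesses for y's pair force x = y
      obtain ⟨u, hu, w, hw, h1, h2, h3⟩ := hg4 y hy.1
      have hxu : u = x := by
        apply hg5 x hx.1 u hu w hw _ _ h3
        · rw [h1, hy.2, hx.2]
        · rw [h2, ← hxy]
      have hyu : u = y := hg5 y hy.1 u hu w hw h1 h2 h3
      rw [← hxu, hyu]
    set B : Finset (ℤ × ℤ) :=
      (Finset.Icc (c.1 - 2) (c.1 + 2) ×ˢ Finset.Icc (c.2 - 2) (c.2 + 2)).erase c with hB
    have hBcard : B.card = 24 := by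
      rw [hB, Finset.card_erase_of_mem]
      · rw [Finset.card_product, Int.card_Icc, Int.card_Icc]
        have h1 : c.1 + 2 + 1 - (c.1 - 2) = 5 := by ring
        have h2 : c.2 + 2 + 1 - (c.2 - 2) = 5 := by ring
        rw [h1, h2]; rfl
      · simp only [Finset.mem_product, Finset.mem_Icc]; omega
    have himg : g' '' T ⊆ (↑B : Set (ℤ × ℤ)) := by
      rintro _ ⟨x, hx, rfl⟩
      have hxS : x ∈ S := hx.1
      have hxc : f x = c := hx.2
      simp only [hg', dif_pos hxS]
      have h1 := hg1 x hxS
      have h2 := hg2 x hxS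
      have h3 := hg3 x hxS
      rw [abs_le] at h2 h3
      have e1 : (f x).1 = c.1 := by rw [hxc]
      have e2 : (f x).2 = c.2 := by rw [hxc]
      simp only [hB, Finset.coe_erase, Set.mem_diff, Finset.coe_product, Set.mem_prod,
        Finset.mem_coe, Finset.mem_Icc, Set.mem_singleton_iff]
      exact ⟨⟨⟨by omega, by omega⟩, ⟨by omega, by omega⟩⟩,
        fun h => h1 (h.trans hxc.symm)⟩
    calc T.ncard = (g' '' T).ncard := (Set.ncard_image_of_injOn hinj).symm
      _ ≤ (B : Set (ℤ × ℤ)).ncard := Set.ncard_le_ncard himg (Set.toFinite _)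
      _ = 24 := by rw [Set.ncard_coe_finset, hBcard]
  refine ⟨cell_bound, ?_⟩
  intro v hv
  set a := f v with ha
  set B : Finset (ℤ × ℤ) :=
    Finset.Icc (a.1 - 2) (a.1 + 2) ×ˢ Finset.Icc (a.2 - 2) (a.2 + 2) with hB
  set A : ℤ × ℤ → Set V := fun d => {u ∈ S | G.Adj v u ∧ f u = d} with hA
  have hsub : {u ∈ S | G.Adj v u} ⊆ ⋃ d ∈ B, A d := by
    intro u hu
    have hb := hrep.2 v u hu.2
    rw [abs_le, abs_le] at hb
    rw [Set.mem_iUnion₂]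
    refine ⟨f u, ?_, hu.1, hu.2, rfl⟩
    simp only [hB, Finset.mem_product, Finset.mem_Icc]
    obtain ⟨⟨h1, h2⟩, h3, h4⟩ := hb
    have e1 : a.1 = (f v).1 := rfl
    have e2 : a.2 = (f v).2 := rfl
    exact ⟨⟨by omega, by omega⟩, ⟨by omega, by omega⟩⟩
  have haB : a ∈ B := by
    simp only [hB, Finset.mem_product, Finset.mem_Icc]
    omega
  have hAbound : ∀ d ∈ B, (A d).ncard ≤ 24 := by
    intro d _
    have hsub' : A d ⊆ {u | u ∈ S ∧ f u = d} := fun u hu => ⟨hu.1, hu.2.2⟩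
    exact le_trans (Set.ncard_le_ncard hsub' (Set.toFinite _)) (cell_bound d)
  have hAa : (A a).ncard ≤ 23 := by
    have hsub' : A a ⊆ {u ∈ S | f u = a} \ {v} := by
      intro u hu
      exact ⟨⟨hu.1, hu.2.2⟩, fun h => G.irrefl (h ▸ hu.2.1)⟩
    have hmem : v ∈ {u ∈ S | f u = a} := ⟨hv, rfl⟩
    calc (A a).ncard ≤ ({u ∈ S | f u = a} \ {v}).ncard :=
          Set.ncard_le_ncard hsub' (Set.toFinite _)
      _ = {u ∈ S | f u = a}.ncard - 1 := Set.ncard_diff_singleton_of_mem hmem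
      _ ≤ 23 := by have := cell_bound a; omega
  calc {u ∈ S | G.Adj v u}.ncard ≤ (⋃ d ∈ B, A d).ncard :=
        Set.ncard_le_ncard hsub (Set.toFinite _)
    _ ≤ ∑ d ∈ B, (A d).ncard := ncard_biUnion_le' B A
    _ = (A a).ncard + ∑ d ∈ B.erase a, (A d).ncard := (Finset.add_sum_erase B _ haB).symm
    _ ≤ 23 + ∑ d ∈ B.erase a, 24 := by
        refine add_le_add hAa (Finset.sum_le_sum fun d hd => hAbound d (Finset.mem_of_mem_erase hd))
    _ ≤ 23 + 24 * 24 := by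
        rw [Finset.sum_const, smul_eq_mul]
        have : (B.erase a).card ≤ 24 := by
          have hc : B.card = 25 := by
            rw [hB, Finset.card_product, Int.card_Icc, Int.card_Icc]
            have h1 : a.1 + 2 + 1 - (a.1 - 2) = 5 := by ring
            have h2 : a.2 + 2 + 1 - (a.2 - 2) = 5 := by ring
            rw [h1, h2]; rfl
          have := Finset.card_erase_of_mem haB
          omega
        omega
    _ = 599 := by norm_num
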